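/- Let Λ^! = (Λ^d_s)^! be presented by the quiver with vertices y ∈ ℕ^{d+1}, Σ y_i = s−1, arrows f_{i,y}: y → y+ε_i (1 ≤ i ≤ d, defined when y_{i−1} ≥ 1), with relations f_i f_i = 0 and f_i f_j = f_j f_i whenever both composities exist. Then any path in Λ^! containing the arrow-direction f_i more than once is zero. -/

import Mathlib

/-- Paths of a quiver, bundled with their endpoints. -/
abbrev PathIdx (V : Type) [Quiver.{0} V] := Σ a b : V, Quiver.Path a b

/-- The path algebra `FQ`: the vector space with basis the paths of the quiver. -/
abbrev PathAlg (F : Type) [Field F] (V : Type) [Quiver.{0} V] := PathIdx V →₀ F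

/-- Composition of composable bundled paths. -/
def pcomp {V : Type} [Quiver.{0} V] (p q : PathIdx V) (h : p.2.1 = q.1) : PathIdx V :=
  ⟨p.1, q.2.1, p.2.2.comp (q.2.2.cast h.symm rfl)⟩

/-- Multiplication of the path algebra: composition of composable paths, `0` otherwise. -/
noncomputable def pmul {F : Type} [Field F] {V : Type} [Quiver.{0} V] [DecidableEq V]
    (x y : PathAlg F V) : PathAlg F V :=
  x.sum fun p cp => y.sum fun q cq =>
    if h : p.2.1 = q.1 then Finsupp.single (pcomp p q h) (cp * cq) else 0

/-- The unit of the path algebra: the sum of the trivial paths at the vertices. -/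
noncomputable def pone (F : Type) [Field F] (V : Type) [Quiver.{0} V] [Fintype V] :
    PathAlg F V :=
  ∑ a : V, Finsupp.single (⟨a, a, Quiver.Path.nil⟩ : PathIdx V) 1

/-- `π : FQ → Λ` presents the algebra `Λ` as the quotient of the path algebra of the
quiver by the two-sided ideal generated by the relation set `Rel`. -/
def IsPresentation {F : Type} [Field F] {V : Type} [Quiver.{0} V] [DecidableEq V] [Fintype V]
    {Λ : Type} [Ring Λ] [Algebra F Λ] (π : PathAlg F V → Λ) (Rel : Set (PathAlg F V)) :
    Prop :=
  (∀ x y, π (x + y) = π x + π y) ∧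
  (∀ (c : F) (x), π (c • x) = c • π x) ∧
  (∀ x y, π (pmul x y) = π x * π y) ∧
  π (pone F V) = 1 ∧
  Function.Surjective π ∧
  ∀ x, π x = 0 ↔ x ∈ Submodule.span F {y | ∃ a b, ∃ r ∈ Rel, y = pmul a (pmul r b)}
/-- Vertices of the type `A` simplex quiver: tuples of `d+1` nonnegative integers
summing to `s - 1`. -/
def Vx (d s : ℕ) : Type := {x : Fin (d + 1) → ℕ // ∑ i, x i = s - 1}

/-- Lower coordinate `i.castSucc` by one and raise coordinate `i.succ` by one. -/
def stepv {d s : ℕ} (x : Vx d s) (i : Fin d) : Fin (d + 1) → ℕ :=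
  Function.update (Function.update x.1 i.castSucc (x.1 i.castSucc - 1)) i.succ
    (x.1 i.succ + 1)

/-- Arrows of the simplex quiver: in direction `i`, from `x` to `x - e_{i} + e_{i+1}`,
whenever the coordinate being lowered is positive. -/
def Ar (d s : ℕ) (x y : Vx d s) : Type :=
  {i : Fin d // 1 ≤ x.1 i.castSucc ∧ y.1 = stepv x i}

instance (d s : ℕ) : Quiver.{0} (Vx d s) := ⟨Ar d s⟩

instance (d s : ℕ) : DecidableEq (Vx d s) :=
  Subtype.instDecidableEq

instance (d s : ℕ) : Finite (Vx d s) := by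
  have hb : ∀ x : Vx d s, ∀ i, x.1 i < s + 1 := by
    intro x i
    have h1 : x.1 i ≤ ∑ j, x.1 j :=
      Finset.single_le_sum (fun j _ => Nat.zero_le (x.1 j)) (Finset.mem_univ i)
    have h2 := x.2
    omega
  exact Finite.of_injective
    (fun x : Vx d s => fun i => (⟨x.1 i, hb x i⟩ : Fin (s + 1)))
    (by
      intro a b h
      apply Subtype.ext
      funext i
      have := congrFun h i
      simpa [Fin.ext_iff] using this)

noncomputable instance (d s : ℕ) : Fintype (Vx d s) := Fintype.ofFinite _

/-- The bundled length-two path through two composable arrows. -/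
def pathTwo {d s : ℕ} {x y z : Vx d s} (a1 : Ar d s x y) (a2 : Ar d s y z) :
    PathIdx (Vx d s) :=
  ⟨x, z, (Quiver.Path.nil.cons (a1 : x ⟶ y)).cons (a2 : y ⟶ z)⟩

/-- The commutation relations `α_i α_j - α_j α_i` (terms falling off the quiver being
read as zero). -/
def RelComm (F : Type) [Field F] (d s : ℕ) : Set (PathAlg F (Vx d s)) :=
  {r | ∃ (x y z : Vx d s) (a1 : Ar d s x y) (a2 : Ar d s y z),
      (∃ (y' z' : Vx d s) (b1 : Ar d s x y') (b2 : Ar d s y' z'),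
        b1.1 = a2.1 ∧ b2.1 = a1.1 ∧
        r = Finsupp.single (pathTwo a1 a2) 1 - Finsupp.single (pathTwo b1 b2) 1) ∨
      ((¬ ∃ (y' z' : Vx d s) (b1 : Ar d s x y') (b2 : Ar d s y' z'),
          b1.1 = a2.1 ∧ b2.1 = a1.1) ∧
        r = Finsupp.single (pathTwo a1 a2) 1)}

/-- The relations of the quadratic dual `(Λ^d_s)^!`: zero relations `f_i f_i = 0`
and commutativity relations `f_i f_j = f_j f_i` whenever both composites exist. -/
def RelDual (F : Type) [Field F] (d s : ℕ) : Set (PathAlg F (Vx d s)) :=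
  {r | ∃ (x y z : Vx d s) (a1 : Ar d s x y) (a2 : Ar d s y z),
      (a1.1 = a2.1 ∧ r = Finsupp.single (pathTwo a1 a2) 1) ∨
      (∃ (y' z' : Vx d s) (b1 : Ar d s x y') (b2 : Ar d s y' z'),
        b1.1 = a2.1 ∧ b2.1 = a1.1 ∧
        r = Finsupp.single (pathTwo a1 a2) 1 - Finsupp.single (pathTwo b1 b2) 1)}

/-- The list of directions of the arrows along a path in the simplex quiver. -/
def dirList {d s : ℕ} : ∀ {a b : Vx d s}, Quiver.Path a b → List (Fin d)
  | _, _, Quiver.Path.nil => []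
  | _, _, Quiver.Path.cons p e => dirList p ++ [(e : Ar d s _ _).1]
section Aux
open Finsupp

variable {d s : ℕ}

/-- Raw step function on tuples. -/
def vstep (f : Fin (d + 1) → ℕ) (i : Fin d) : Fin (d + 1) → ℕ :=
  Function.update (Function.update f i.castSucc (f i.castSucc - 1)) i.succ
    (f i.succ + 1)

lemma stepv_eq_vstep (x : Vx d s) (i : Fin d) : stepv x i = vstep x.1 i := rfl

lemma castSucc_ne_succ (i : Fin d) : (i.castSucc : Fin (d+1)) ≠ i.succ :=
  (Fin.castSucc_lt_succ (i := i)).ne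

lemma vstep_apply (f : Fin (d + 1) → ℕ) (i : Fin d) (k : Fin (d + 1)) :
    vstep f i k = if k = i.succ then f i.succ + 1
      else if k = i.castSucc then f i.castSucc - 1 else f k := by
  unfold vstep
  rcases eq_or_ne k i.succ with h | h
  · subst h; simp
  · rcases eq_or_ne k i.castSucc with h2 | h2
    · simp [h, h2, Function.update_apply, castSucc_ne_succ]
    · simp [Function.update_apply, h, h2]

lemma sum_vstep (f : Fin (d + 1) → ℕ) (i : Fin d) (h : 1 ≤ f i.castSucc) :
    ∑ k, vstep f i k = ∑ k, f k := by
  classical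
  have hcs : i.castSucc ∈ Finset.univ \ {i.succ} := by
    simp [castSucc_ne_succ i]
  have e1 : ∑ k, vstep f i k = (f i.succ + 1) +
      ∑ k ∈ Finset.univ \ {i.succ},
        Function.update f i.castSucc (f i.castSucc - 1) k :=
    Finset.sum_update_of_mem (Finset.mem_univ _)
      (Function.update f i.castSucc (f i.castSucc - 1)) (f i.succ + 1)
  have e2 : ∑ k ∈ Finset.univ \ {i.succ},
      Function.update f i.castSucc (f i.castSucc - 1) k
      = (f i.castSucc - 1) + ∑ k ∈ (Finset.univ \ {i.succ}) \ {i.castSucc}, f k :=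
    Finset.sum_update_of_mem hcs f (f i.castSucc - 1)
  have e3 : ∑ k, f k = f i.succ + ∑ k ∈ Finset.univ \ {i.succ}, f k := by
    rw [Finset.sum_eq_sum_sdiff_singleton_add (Finset.mem_univ i.succ) f]
    ring
  have e4 : ∑ k ∈ Finset.univ \ {i.succ}, f k
      = f i.castSucc + ∑ k ∈ (Finset.univ \ {i.succ}) \ {i.castSucc}, f k := by
    rw [Finset.sum_eq_sum_sdiff_singleton_add hcs f]
    ring
  omega

/-- Validity of a direction list from a tuple. -/
def ok : (Fin (d + 1) → ℕ) → List (Fin d) → Prop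
  | _, [] => True
  | f, i :: t => 1 ≤ f i.castSucc ∧ ok (vstep f i) t

/-- Run a list of directions. -/
def run (f : Fin (d + 1) → ℕ) (l : List (Fin d)) : Fin (d + 1) → ℕ :=
  l.foldl vstep f

@[simp] lemma run_nil (f : Fin (d+1) → ℕ) : run f ([] : List (Fin d)) = f := rfl
@[simp] lemma run_cons (f : Fin (d+1) → ℕ) (i : Fin d) (t : List (Fin d)) :
    run f (i :: t) = run (vstep f i) t := rfl
@[simp] lemma run_append (f : Fin (d+1) → ℕ) (l1 l2 : List (Fin d)) :
    run f (l1 ++ l2) = run (run f l1) l2 := List.foldl_append ..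

lemma ok_append {f : Fin (d+1) → ℕ} {l1 l2 : List (Fin d)} :
    ok f (l1 ++ l2) ↔ ok f l1 ∧ ok (run f l1) l2 := by
  induction l1 generalizing f with
  | nil => simp [ok]
  | cons i t ih => simp [ok, ih, and_assoc]

lemma sum_run {f : Fin (d+1) → ℕ} {l : List (Fin d)} (h : ok f l) :
    ∑ k, run f l k = ∑ k, f k := by
  induction l generalizing f with
  | nil => rfl
  | cons i t ih => rw [run_cons, ih h.2, sum_vstep _ _ h.1]

/-- End vertex of a valid direction list. -/
def endv (x : Vx d s) (l : List (Fin d)) (h : ok x.1 l) : Vx d s :=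
  ⟨run x.1 l, by rw [sum_run h, x.2]⟩

lemma endv_nil (x : Vx d s) (h : ok x.1 []) : endv x [] h = x := rfl

/-- The bundled path of a valid direction list. -/
def pathOf : (l : List (Fin d)) → (x : Vx d s) → (h : ok x.1 l) →
    Quiver.Path x (endv x l h)
  | [], _, _ => Quiver.Path.nil
  | i :: t, x, h =>
      (Quiver.Path.nil.cons
        (show x ⟶ (⟨vstep x.1 i, by rw [sum_vstep _ _ h.1, x.2]⟩ : Vx d s) from
          (⟨i, h.1, rfl⟩ : Ar d s _ _))).comp
        (pathOf t ⟨vstep x.1 i, by rw [sum_vstep _ _ h.1, x.2]⟩ h.2)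

end Aux
section Aux2
open Finsupp

variable {F : Type} [Field F] {d s : ℕ}
variable {Λ : Type} [Ring Λ] [Algebra F Λ]

lemma pmul_single_single (p q : PathIdx (Vx d s)) (h : p.2.1 = q.1) (c c' : F) :
    pmul (Finsupp.single p c) (Finsupp.single q c')
      = Finsupp.single (pcomp p q h) (c * c') := by
  unfold pmul
  rw [Finsupp.sum_single_index (by simp [Finsupp.sum_single_index]),
      Finsupp.sum_single_index (by simp), dif_pos h]

lemma pcomp_nil_right (p : PathIdx (Vx d s)) (z : Vx d s) (h : p.2.1 = z) :
    pcomp p ⟨z, z, Quiver.Path.nil⟩ h = p := by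
  obtain ⟨a, b, q⟩ := p
  dsimp at h
  subst h
  simp [pcomp, Quiver.Path.cast_rfl_rfl]

lemma pcomp_nil_left (p : PathIdx (Vx d s)) (x : Vx d s) (h : x = p.1) :
    pcomp ⟨x, x, Quiver.Path.nil⟩ p h = p := by
  obtain ⟨a, b, q⟩ := p
  dsimp at h
  subst h
  simp [pcomp, Quiver.Path.cast_rfl_rfl]

lemma pcomp_mk {a b c : Vx d s} (p : Quiver.Path a b) (q : Quiver.Path b c) :
    pcomp (⟨a, b, p⟩ : PathIdx (Vx d s)) (⟨b, c, q⟩ : PathIdx (Vx d s)) rfl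
      = ⟨a, c, p.comp q⟩ := by
  simp [pcomp, Quiver.Path.cast_rfl_rfl]

lemma pmul_single_sub (p : PathIdx (Vx d s)) (c : F) (y1 y2 : PathAlg F (Vx d s)) :
    pmul (Finsupp.single p c) (y1 - y2)
      = pmul (Finsupp.single p c) y1 - pmul (Finsupp.single p c) y2 := by
  unfold pmul
  rw [Finsupp.sum_single_index (by simp), Finsupp.sum_single_index (by simp),
      Finsupp.sum_single_index (by simp)]
  apply Finsupp.sum_sub_index
  intro q b1 b2
  split
  · rw [mul_sub, Finsupp.single_sub]
  · simp

lemma pmul_sub_single (y1 y2 : PathAlg F (Vx d s)) (q : PathIdx (Vx d s)) (c : F) :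
    pmul (y1 - y2) (Finsupp.single q c)
      = pmul y1 (Finsupp.single q c) - pmul y2 (Finsupp.single q c) := by
  unfold pmul
  apply Finsupp.sum_sub_index
  intro p b1 b2
  rw [Finsupp.sum_single_index (by simp), Finsupp.sum_single_index (by simp),
      Finsupp.sum_single_index (by simp)]
  split
  · rw [sub_mul, Finsupp.single_sub]
  · simp

variable {π : PathAlg F (Vx d s) → Λ} (hπ : IsPresentation π (RelDual F d s))
include hπ

lemma pi_sub (x y : PathAlg F (Vx d s)) : π (x - y) = π x - π y := by
  have : x - y = x + (-1 : F) • y := by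
    rw [neg_one_smul, sub_eq_add_neg]
  rw [this, hπ.1, hπ.2.1, neg_one_smul, sub_eq_add_neg]

lemma pi_comp {a b c : Vx d s} (p : Quiver.Path a b) (q : Quiver.Path b c) :
    π (Finsupp.single (⟨a, c, p.comp q⟩ : PathIdx (Vx d s)) 1)
      = π (Finsupp.single (⟨a, b, p⟩ : PathIdx (Vx d s)) 1)
        * π (Finsupp.single (⟨b, c, q⟩ : PathIdx (Vx d s)) 1) := by
  rw [← hπ.2.2.1, pmul_single_single _ _ rfl, one_mul, pcomp_mk]

lemma pi_rel_zero {r : PathAlg F (Vx d s)} (x z : Vx d s)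
    (hr : r ∈ RelDual F d s)
    (heq : pmul (Finsupp.single (⟨x, x, Quiver.Path.nil⟩ : PathIdx (Vx d s)) 1)
        (pmul r (Finsupp.single (⟨z, z, Quiver.Path.nil⟩ : PathIdx (Vx d s)) 1)) = r) :
    π r = 0 := by
  apply (hπ.2.2.2.2.2 r).mpr
  apply Submodule.subset_span
  exact ⟨_, _, r, hr, heq.symm⟩

lemma key_zero {x y z : Vx d s} (a1 : Ar d s x y) (a2 : Ar d s y z)
    (h : a1.1 = a2.1) : π (Finsupp.single (pathTwo a1 a2) 1) = 0 := by
  apply pi_rel_zero hπ x z ⟨x, y, z, a1, a2, Or.inl ⟨h, rfl⟩⟩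
  rw [pmul_single_single (pathTwo a1 a2) ⟨z, z, Quiver.Path.nil⟩ rfl,
      pcomp_nil_right (pathTwo a1 a2) z rfl, one_mul,
      pmul_single_single ⟨x, x, Quiver.Path.nil⟩ (pathTwo a1 a2) rfl,
      pcomp_nil_left (pathTwo a1 a2) x rfl, one_mul]

lemma key_comm {x y y' z : Vx d s} (a1 : Ar d s x y) (a2 : Ar d s y z)
    (b1 : Ar d s x y') (b2 : Ar d s y' z)
    (h1 : b1.1 = a2.1) (h2 : b2.1 = a1.1) :
    π (Finsupp.single (pathTwo a1 a2) 1) = π (Finsupp.single (pathTwo b1 b2) 1) := by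
  have hz : π (Finsupp.single (pathTwo a1 a2) 1 - Finsupp.single (pathTwo b1 b2) 1)
      = 0 := by
    apply pi_rel_zero hπ x z
      ⟨x, y, z, a1, a2, Or.inr ⟨y', z, b1, b2, h1, h2, rfl⟩⟩
    rw [pmul_sub_single,
        pmul_single_single (pathTwo a1 a2) ⟨z, z, Quiver.Path.nil⟩ rfl,
        pmul_single_single (pathTwo b1 b2) ⟨z, z, Quiver.Path.nil⟩ rfl,
        pcomp_nil_right (pathTwo a1 a2) z rfl, pcomp_nil_right (pathTwo b1 b2) z rfl, one_mul,
        pmul_single_sub,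
        pmul_single_single ⟨x, x, Quiver.Path.nil⟩ (pathTwo a1 a2) rfl,
        pmul_single_single ⟨x, x, Quiver.Path.nil⟩ (pathTwo b1 b2) rfl,
        pcomp_nil_left (pathTwo a1 a2) x rfl, pcomp_nil_left (pathTwo b1 b2) x rfl, one_mul]
  rw [pi_sub hπ] at hz
  exact sub_eq_zero.mp hz

end Aux2
section Aux3
open Finsupp

variable {d s : ℕ}

lemma vstep_apply' (f : Fin (d+1) → ℕ) (i : Fin d) (k : Fin (d+1)) :
    vstep f i k = if (k:ℕ) = (i:ℕ)+1 then f k + 1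
      else if (k:ℕ) = (i:ℕ) then f k - 1 else f k := by
  have h1 : (k = i.succ) ↔ ((k:ℕ) = (i:ℕ)+1) := by rw [Fin.ext_iff]; simp
  have h2 : (k = i.castSucc) ↔ ((k:ℕ) = (i:ℕ)) := by rw [Fin.ext_iff]; simp
  rw [vstep_apply]
  by_cases hk : k = i.succ
  · rw [if_pos hk, if_pos (h1.mp hk), hk]
  · rw [if_neg hk, if_neg fun c => hk (h1.mpr c)]
    by_cases hk2 : k = i.castSucc
    · rw [if_pos hk2, if_pos (h2.mp hk2), hk2]
    · rw [if_neg hk2, if_neg fun c => hk2 (h2.mpr c)]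

lemma vstep_comm (f : Fin (d+1) → ℕ) (u v : Fin d) (huv : u ≠ v)
    (hu : 1 ≤ f u.castSucc) (hv : 1 ≤ f v.castSucc) :
    vstep (vstep f u) v = vstep (vstep f v) u := by
  have huv' : (u:ℕ) ≠ (v:ℕ) := fun c => huv (Fin.ext c)
  funext k
  by_cases hku : k = u.castSucc
  · subst hku
    simp only [vstep_apply', Fin.coe_castSucc]
    split_ifs <;> omega
  · by_cases hkv : k = v.castSucc
    · subst hkv
      simp only [vstep_apply', Fin.coe_castSucc]
      split_ifs <;> omega
    · have h1 : (k:ℕ) ≠ (u:ℕ) := fun c => hku (Fin.ext (by simp [c]))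
      have h2 : (k:ℕ) ≠ (v:ℕ) := fun c => hkv (Fin.ext (by simp [c]))
      simp only [vstep_apply']
      split_ifs <;> omega

lemma ok_swap_snd (f : Fin (d+1) → ℕ) (u v : Fin d) (huv : u ≠ v)
    (hu : 1 ≤ f u.castSucc) : 1 ≤ vstep f v u.castSucc := by
  have huv' : (u:ℕ) ≠ (v:ℕ) := fun c => huv (Fin.ext c)
  rw [vstep_apply']
  simp only [Fin.coe_castSucc]
  split_ifs <;> omega

lemma hv_of_ne (f : Fin (d+1) → ℕ) (u v : Fin d) (hvu : (v:ℕ) ≠ (u:ℕ)+1)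
    (huv : u ≠ v) (h2 : 1 ≤ vstep f u v.castSucc) : 1 ≤ f v.castSucc := by
  have huv' : (u:ℕ) ≠ (v:ℕ) := fun c => huv (Fin.ext c)
  rw [vstep_apply'] at h2
  simp only [Fin.coe_castSucc] at h2
  split_ifs at h2 <;> omega

lemma forced_succ (f : Fin (d+1) → ℕ) (u v : Fin d) (huv : u ≠ v)
    (h2 : 1 ≤ vstep f u v.castSucc) (hv0 : f v.castSucc = 0) : (v:ℕ) = (u:ℕ)+1 := by
  have huv' : (u:ℕ) ≠ (v:ℕ) := fun c => huv (Fin.ext c)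
  rw [vstep_apply'] at h2
  simp only [Fin.coe_castSucc] at h2
  split_ifs at h2 <;> omega

/-- Next vertex. -/
def nextv (x : Vx d s) (i : Fin d) (h1 : 1 ≤ x.1 i.castSucc) : Vx d s :=
  ⟨vstep x.1 i, by rw [sum_vstep _ _ h1, x.2]⟩

variable {F : Type} [Field F] {Λ : Type} [Ring Λ] [Algebra F Λ]
variable (π : PathAlg F (Vx d s) → Λ)

/-- The image under `π` of (the basis vector of) the path determined by a valid
direction list. -/
noncomputable def P (x : Vx d s) (l : List (Fin d)) (h : ok x.1 l) : Λ :=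
  π (Finsupp.single (⟨x, endv x l h, pathOf l x h⟩ : PathIdx (Vx d s)) 1)

omit [Ring Λ] [Algebra F Λ] in
lemma P_congr {x x' : Vx d s} (hx : x = x') (l : List (Fin d)) (h : ok x.1 l)
    (h' : ok x'.1 l) : P π x l h = P π x' l h' := by subst hx; rfl

variable {π} (hπ : IsPresentation π (RelDual F (d := d) (s := s)))
include hπ

lemma P_cons (x : Vx d s) (i : Fin d) (t : List (Fin d)) (h : ok x.1 (i :: t)) :
    P π x (i :: t) h
      = π (Finsupp.single (⟨x, nextv x i h.1,
            Quiver.Path.nil.cons (⟨i, h.1, rfl⟩ : Ar d s x (nextv x i h.1))⟩ :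
              PathIdx (Vx d s)) 1)
        * P π (nextv x i h.1) t h.2 := by
  exact pi_comp hπ
    (Quiver.Path.nil.cons (⟨i, h.1, rfl⟩ : Ar d s x (nextv x i h.1)))
    (pathOf t (nextv x i h.1) h.2)

lemma P_append (x : Vx d s) (l1 l2 : List (Fin d)) (h : ok x.1 (l1 ++ l2)) :
    P π x (l1 ++ l2) h
      = P π x l1 (ok_append.mp h).1
        * P π (endv x l1 (ok_append.mp h).1) l2 (ok_append.mp h).2 := by
  induction l1 generalizing x with
  | nil =>
      have := pi_comp hπ (Quiver.Path.nil : Quiver.Path x x)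
        (pathOf l2 x (ok_append.mp h).2)
      rw [Quiver.Path.nil_comp] at this
      exact this
  | cons i t ih =>
      refine (P_cons hπ x i (t ++ l2) h).trans ?_
      refine (congrArg _ (ih (nextv x i h.1) h.2)).trans ?_
      rw [P_cons hπ x i t, mul_assoc]
      rfl

omit [Ring Λ] [Algebra F Λ] hπ in
lemma P_two (x : Vx d s) (u v : Fin d) (h : ok x.1 [u, v]) :
    P π x [u, v] h
      = π (Finsupp.single (pathTwo
          (⟨u, h.1, rfl⟩ : Ar d s x (nextv x u h.1))
          (⟨v, h.2.1, rfl⟩ : Ar d s (nextv x u h.1) (endv x [u, v] h))) 1) := rfl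

end Aux3
section Aux4
open Finsupp

variable {d s : ℕ} {F : Type} [Field F] {Λ : Type} [Ring Λ] [Algebra F Λ]
variable {π : PathAlg F (Vx d s) → Λ} (hπ : IsPresentation π (RelDual F (d := d) (s := s)))

omit [Ring Λ] [Algebra F Λ] hπ in
lemma pathTwo_congr {x y z z' : Vx d s} (hz : z = z') (a1 : Ar d s x y)
    (a2 : Ar d s y z) (a2' : Ar d s y z') (h2 : a2.1 = a2'.1) :
    pathTwo a1 a2 = pathTwo a1 a2' := by
  subst hz
  rw [show a2 = a2' from Subtype.ext h2]

include hπ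

lemma P_ii (x : Vx d s) (i : Fin d) (h : ok x.1 [i, i]) : P π x [i, i] h = 0 := by
  rw [P_two]
  exact key_zero hπ _ _ rfl

lemma P_swap (x : Vx d s) (u v : Fin d) (huv : u ≠ v) (hv : 1 ≤ x.1 v.castSucc)
    (h : ok x.1 [u, v]) :
    ∃ h' : ok x.1 [v, u],
      endv x [v, u] h' = endv x [u, v] h ∧ P π x [u, v] h = P π x [v, u] h' := by
  have hu : 1 ≤ x.1 u.castSucc := h.1
  have h' : ok x.1 [v, u] := ⟨hv, ok_swap_snd x.1 u v huv hu, trivial⟩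
  have hcomm : vstep (vstep x.1 v) u = vstep (vstep x.1 u) v :=
    vstep_comm x.1 v u huv.symm hv hu
  have hend : endv x [v, u] h' = endv x [u, v] h := Subtype.ext hcomm
  refine ⟨h', hend, ?_⟩
  rw [P_two, P_two]
  have hb2 : (endv x [u, v] h).1 = stepv (nextv x v hv) u := hcomm.symm
  have := key_comm hπ
    (⟨u, hu, rfl⟩ : Ar d s x (nextv x u hu))
    (⟨v, h.2.1, rfl⟩ : Ar d s (nextv x u hu) (endv x [u, v] h))
    (⟨v, hv, rfl⟩ : Ar d s x (nextv x v hv))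
    (⟨u, ok_swap_snd x.1 u v huv hu, hb2⟩ : Ar d s (nextv x v hv) (endv x [u, v] h))
    rfl rfl
  rw [this]
  exact congrArg (fun t => π (Finsupp.single t 1))
    (pathTwo_congr hend.symm (⟨v, hv, rfl⟩ : Ar d s x (nextv x v hv))
      (⟨u, ok_swap_snd x.1 u v huv hu, hb2⟩ : Ar d s (nextv x v hv) (endv x [u, v] h))
      (⟨u, h'.2.1, rfl⟩ : Ar d s (nextv x v hv) (endv x [v, u] h')) rfl)

lemma P_swap_mid (x : Vx d s) (pre post : List (Fin d)) (u v : Fin d) (huv : u ≠ v)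
    (h : ok x.1 (pre ++ u :: v :: post)) (hv : 1 ≤ run x.1 pre v.castSucc) :
    ∃ h' : ok x.1 (pre ++ v :: u :: post),
      P π x (pre ++ u :: v :: post) h = P π x (pre ++ v :: u :: post) h' := by
  obtain ⟨h1, h2⟩ := ok_append.mp h
  have okuv : ok (endv x pre h1).1 [u, v] := ⟨h2.1, h2.2.1, trivial⟩
  obtain ⟨h'', hend, hP⟩ := P_swap hπ (endv x pre h1) u v huv hv okuv
  have okpost : ok (run (endv x pre h1).1 [u, v]) post := h2.2.2
  have okpost' : ok (run (endv x pre h1).1 [v, u]) post := by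
    have hc := congrArg Subtype.val hend
    have okpost2 : ok ((endv (endv x pre h1) [u, v] okuv).1) post := okpost
    rw [← hc] at okpost2
    exact okpost2
  have hnew : ok x.1 (pre ++ v :: u :: post) :=
    ok_append.mpr ⟨h1, h''.1, h''.2.1, okpost'⟩
  refine ⟨hnew, ?_⟩
  calc P π x (pre ++ u :: v :: post) h
      = P π x pre h1 * P π (endv x pre h1) (u :: v :: post) h2 :=
        P_append hπ x pre (u :: v :: post) h
    _ = P π x pre h1 * (P π (endv x pre h1) [u, v] okuv
          * P π (endv (endv x pre h1) [u, v] okuv) post okpost) :=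
        congrArg _ (P_append hπ (endv x pre h1) [u, v] post
          (ok_append.mpr ⟨okuv, okpost⟩))
    _ = P π x pre h1 * (P π (endv x pre h1) [v, u] h''
          * P π (endv (endv x pre h1) [v, u] h'') post okpost') :=
        congrArg _ (congrArg₂ (· * ·) hP (P_congr π hend.symm post okpost okpost'))
    _ = P π x pre h1 * P π (endv x pre h1) (v :: u :: post) (ok_append.mp hnew).2 :=
        (congrArg _ (P_append hπ (endv x pre h1) [v, u] post
          (ok_append.mpr ⟨h'', okpost'⟩))).symm
    _ = P π x (pre ++ v :: u :: post) hnew :=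
        (P_append hπ x pre (v :: u :: post) hnew).symm

end Aux4
section Aux5
open Finsupp

variable {d s : ℕ} {F : Type} [Field F] {Λ : Type} [Ring Λ] [Algebra F Λ]
variable {π : PathAlg F (Vx d s) → Λ} (hπ : IsPresentation π (RelDual F (d := d) (s := s)))

/-- Successor relation on directions. -/
def Rsucc (u v : Fin d) : Prop := (v:ℕ) = (u:ℕ) + 1

omit hπ in
lemma P_cast {x : Vx d s} {l l' : List (Fin d)} (hl : l = l') (h : ok x.1 l) :
    ∃ h' : ok x.1 l', P π x l h = P π x l' h' := by
  subst hl; exact ⟨h, rfl⟩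

omit [Field F] [Ring Λ] [Algebra F Λ] hπ in
lemma chain_lt : ∀ (l : List (Fin d)) (w : Fin d),
    List.Chain' (Rsucc (d := d)) (w :: l) → ∀ v ∈ l, (w:ℕ) < (v:ℕ) := by
  intro l
  induction l with
  | nil => intro w _ v hv; simp at hv
  | cons u t ih =>
      intro w hch v hv
      have h1 : Rsucc w u := List.isChain_cons_cons.mp hch |>.1
      have h2 := List.isChain_cons_cons.mp hch |>.2
      unfold Rsucc at h1
      rcases List.mem_cons.mp hv with rfl | hv
      · omega
      · have := ih u h2 v hv
        omega

omit [Field F] [Ring Λ] [Algebra F Λ] hπ in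
lemma chain_pred : ∀ (b' : List (Fin d)) (w z : Fin d),
    List.Chain' (Rsucc (d := d)) (w :: b' ++ [z]) →
    ∀ v ∈ b' ++ [z], ∃ p ∈ w :: b', Rsucc p v := by
  intro b'
  induction b' with
  | nil =>
      intro w z hch v hv
      simp only [List.nil_append, List.mem_singleton] at hv
      subst hv
      exact ⟨w, by simp, (List.isChain_cons_cons.mp hch).1⟩
  | cons u t ih =>
      intro w z hch v hv
      have h1 : Rsucc w u := (List.isChain_cons_cons.mp hch).1
      have h2 := (List.isChain_cons_cons.mp hch).2
      rcases List.mem_cons.mp hv with rfl | hv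
      · exact ⟨w, by simp, h1⟩
      · obtain ⟨p, hp, hr⟩ := ih u z h2 v hv
        exact ⟨p, by simpa using Or.inr (by simpa using hp), hr⟩

include hπ

lemma P_bubble : ∀ (t : List (Fin d)) (x : Vx d s) (pre : List (Fin d)) (c : Fin d)
    (h : ok x.1 (pre ++ c :: t))
    (hc : ∀ v ∈ t, c ≠ v ∧ (v:ℕ) ≠ (c:ℕ) + 1),
    ∃ h' : ok x.1 (pre ++ (t ++ [c])),
      P π x (pre ++ c :: t) h = P π x (pre ++ (t ++ [c])) h' := by
  intro t
  induction t with
  | nil => intro x pre c h _; exact ⟨h, rfl⟩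
  | cons v t' ih =>
      intro x pre c h hc
      have hcv : c ≠ v := (hc v (by simp)).1
      have hne : (v:ℕ) ≠ (c:ℕ) + 1 := (hc v (by simp)).2
      have okmid := (ok_append.mp h).2
      have hv : 1 ≤ run x.1 pre v.castSucc :=
        hv_of_ne (run x.1 pre) c v hne hcv okmid.2.1
      obtain ⟨h2, hPeq⟩ := P_swap_mid hπ x pre t' c v hcv h hv
      have e1 : pre ++ v :: c :: t' = (pre ++ [v]) ++ c :: t' := by simp
      obtain ⟨h3, hP3⟩ := P_cast (π := π) e1 h2
      obtain ⟨h4, hP4⟩ := ih x (pre ++ [v]) c h3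
        (fun u hu => hc u (by simp [hu]))
      have e2 : (pre ++ [v]) ++ (t' ++ [c]) = pre ++ ((v :: t') ++ [c]) := by simp
      obtain ⟨h5, hP5⟩ := P_cast (π := π) e2 h4
      exact ⟨h5, (((hPeq.trans hP3).trans hP4).trans hP5)⟩

end Aux5
section Aux6
open Finsupp

variable {d s : ℕ} {F : Type} [Field F] {Λ : Type} [Ring Λ] [Algebra F Λ]
variable {π : PathAlg F (Vx d s) → Λ} (hπ : IsPresentation π (RelDual F (d := d) (s := s)))
include hπ

lemma scan (N : ℕ)
    (IH : ∀ (m' : List (Fin d)) (x : Vx d s) (i : Fin d), m'.length ≤ N →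
      m'.Nodup → i ∉ m' → ∀ h : ok x.1 (i :: m' ++ [i]),
        P π x (i :: m' ++ [i]) h = 0) :
    ∀ (a b : List (Fin d)) (x : Vx d s) (i : Fin d),
      (a ++ b).length = N + 1 → (a ++ b).Nodup → i ∉ a ++ b →
      List.Chain' Rsucc (b ++ [i]) →
      ∀ h : ok x.1 (i :: (a ++ b) ++ [i]), P π x (i :: (a ++ b) ++ [i]) h = 0 := by
  intro a
  induction a using List.reverseRecOn with
  | nil =>
      intro b x i hlen hnd hnm hch h
      cases b with
      | nil => simp at hlen
      | cons w b' =>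
          have hiw : i ≠ w := fun e => hnm (by simp [e])
          have hwlt : (w:ℕ) < (i:ℕ) := chain_lt (b' ++ [i]) w hch i (by simp)
          have okm : ok x.1 (i :: w :: (b' ++ [i])) := h
          have hv : 1 ≤ x.1 w.castSucc :=
            hv_of_ne x.1 i w (by omega) hiw okm.2.1
          obtain ⟨h2, hPeq⟩ := P_swap_mid hπ x [] (b' ++ [i]) i w hiw h hv
          have h2' : ok x.1 ([w] ++ (i :: b' ++ [i])) := h2
          have E2 := P_append hπ x [w] (i :: b' ++ [i]) h2'
          have hz := IH b' (endv x [w] (ok_append.mp h2').1) i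
            (by simp at hlen; omega)
            ((List.nodup_cons.mp (by simpa using hnd)).2)
            (fun hb => hnm (by simp [hb]))
            (ok_append.mp h2').2
          calc P π x (i :: (([] : List (Fin d)) ++ w :: b') ++ [i]) h
              = P π x ([] ++ w :: i :: (b' ++ [i])) h2 := hPeq
            _ = P π x ([w] ++ (i :: b' ++ [i])) h2' := rfl
            _ = P π x [w] (ok_append.mp h2').1
                  * P π (endv x [w] (ok_append.mp h2').1) (i :: b' ++ [i])
                    (ok_append.mp h2').2 := E2
            _ = 0 := by rw [hz, mul_zero]
  | append_singleton a' c ih =>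
      intro b x i hlen hnd hnm hch h
      have e1 : (i :: ((a' ++ [c]) ++ b) ++ [i]) = (i :: a') ++ (c :: (b ++ [i])) := by
        simp
      obtain ⟨h2, hP2⟩ := P_cast (π := π) e1 h
      have hsplit := ok_append.mp h2
      have hci : c ≠ i := fun e => hnm (by simp [e])
      cases b with
      | nil =>
          by_cases hv : 1 ≤ run x.1 (i :: a') i.castSucc
          · obtain ⟨h3, hP3⟩ := P_swap_mid hπ x (i :: a') [] c i hci h2 hv
            have e2 : (i :: a') ++ (i :: c :: []) = (i :: a' ++ [i]) ++ [c] := by simp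
            obtain ⟨h4, hP4⟩ := P_cast (π := π) e2 h3
            have E := P_append hπ x (i :: a' ++ [i]) [c] h4
            have hz := IH a' x i (by simp at hlen; omega)
              ((List.nodup_append.mp (show (a' ++ [c]).Nodup by simpa using hnd)).1)
              (fun hm => hnm (by simp [hm]))
              (ok_append.mp h4).1
            calc P π x (i :: ((a' ++ [c]) ++ ([] : List (Fin d))) ++ [i]) h
                = P π x ((i :: a') ++ (c :: (([] : List (Fin d)) ++ [i]))) h2 := hP2
              _ = P π x ((i :: a') ++ (i :: c :: [])) h3 := hP3
              _ = P π x ((i :: a' ++ [i]) ++ [c]) h4 := hP4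
              _ = P π x (i :: a' ++ [i]) (ok_append.mp h4).1
                    * P π (endv x (i :: a' ++ [i]) (ok_append.mp h4).1) [c]
                      (ok_append.mp h4).2 := E
              _ = 0 := by rw [hz, zero_mul]
          · have h2snd := hsplit.2
            have hforced : (i:ℕ) = (c:ℕ) + 1 :=
              forced_succ (run x.1 (i :: a')) c i hci h2snd.2.1 (by omega)
            have e4 : i :: ((a' ++ [c]) ++ ([] : List (Fin d))) ++ [i]
                = i :: (a' ++ [c]) ++ [i] := by simp
            obtain ⟨h7, hP7⟩ := P_cast (π := π) e4 h
            rw [hP7]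
            exact ih [c] x i (by simpa using hlen) (by simpa using hnd)
              (by simpa using hnm)
              (by
                simp only [List.singleton_append]
                exact List.isChain_cons_cons.mpr ⟨hforced, List.isChain_singleton i⟩)
              h7
      | cons w b' =>
          have hdisj := (List.nodup_append.mp hnd).2.2
          have hcw : c ≠ w := by
            intro e
            exact hdisj c (show c ∈ a' ++ [c] by simp) c (show c ∈ w :: b' by simp [e]) rfl
          by_cases hv : 1 ≤ run x.1 (i :: a') w.castSucc
          · obtain ⟨h3, hP3⟩ := P_swap_mid hπ x (i :: a') (b' ++ [i]) c w hcw h2 hv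
            have e2 : (i :: a') ++ (w :: c :: (b' ++ [i]))
                = ((i :: a') ++ [w]) ++ (c :: (b' ++ [i])) := by simp
            obtain ⟨h4, hP4⟩ := P_cast (π := π) e2 h3
            have hcsub : ∀ v ∈ b' ++ [i], c ≠ v ∧ (v:ℕ) ≠ (c:ℕ) + 1 := by
              intro v hvmem
              have hpred := chain_pred b' w i hch v hvmem
              constructor
              · rintro rfl
                rcases List.mem_append.mp hvmem with hb | hi
                · exact hdisj c (show c ∈ a' ++ [c] by simp)
                    c (show c ∈ w :: b' by simp [hb]) rfl
                · simp at hi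
                  exact hci hi
              · intro e
                obtain ⟨p, hp, hr⟩ := hpred
                have hpc : p = c := Fin.ext (by unfold Rsucc at hr; omega)
                rw [hpc] at hp
                exact hdisj c (show c ∈ a' ++ [c] by simp)
                  c (show c ∈ w :: b' by simpa using hp) rfl
            obtain ⟨h5, hP5⟩ := P_bubble hπ (b' ++ [i]) x ((i :: a') ++ [w]) c h4 hcsub
            have e3 : ((i :: a') ++ [w]) ++ ((b' ++ [i]) ++ [c])
                = (i :: (a' ++ w :: b') ++ [i]) ++ [c] := by simp
            obtain ⟨h6, hP6⟩ := P_cast (π := π) e3 h5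
            have E := P_append hπ x (i :: (a' ++ w :: b') ++ [i]) [c] h6
            have hz := IH (a' ++ w :: b') x i
              (by simp at hlen ⊢; omega)
              (by
                have : (a' ++ w :: b').Sublist ((a' ++ [c]) ++ w :: b') := by
                  refine List.Sublist.append ?_ (List.Sublist.refl _)
                  exact (List.sublist_append_left a' [c])
                exact this.nodup hnd)
              (by
                intro hmem
                rcases List.mem_append.mp hmem with h1 | h1
                · exact hnm (by simp [h1])
                · exact hnm (by simp [List.mem_cons.mp h1]))
              (ok_append.mp h6).1
            calc P π x (i :: ((a' ++ [c]) ++ w :: b') ++ [i]) h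
                = P π x ((i :: a') ++ (c :: ((w :: b') ++ [i]))) h2 := hP2
              _ = P π x ((i :: a') ++ (w :: c :: (b' ++ [i]))) h3 := hP3
              _ = P π x (((i :: a') ++ [w]) ++ (c :: (b' ++ [i]))) h4 := hP4
              _ = P π x (((i :: a') ++ [w]) ++ ((b' ++ [i]) ++ [c])) h5 := hP5
              _ = P π x ((i :: (a' ++ w :: b') ++ [i]) ++ [c]) h6 := hP6
              _ = P π x (i :: (a' ++ w :: b') ++ [i]) (ok_append.mp h6).1
                    * P π (endv x (i :: (a' ++ w :: b') ++ [i]) (ok_append.mp h6).1)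
                      [c] (ok_append.mp h6).2 := E
              _ = 0 := by rw [hz, zero_mul]
          · have h2snd := hsplit.2
            have hforced : (w:ℕ) = (c:ℕ) + 1 :=
              forced_succ (run x.1 (i :: a')) c w hcw h2snd.2.1 (by omega)
            have e4 : i :: ((a' ++ [c]) ++ (w :: b')) ++ [i]
                = i :: (a' ++ (c :: w :: b')) ++ [i] := by simp
            obtain ⟨h7, hP7⟩ := P_cast (π := π) e4 h
            rw [hP7]
            exact ih (c :: w :: b') x i (by simp at hlen ⊢; omega)
              (by
                have e : (a' ++ [c]) ++ w :: b' = a' ++ (c :: w :: b') := by simp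
                rw [← e]; exact hnd)
              (by
                intro hmem
                apply hnm
                have e : (a' ++ [c]) ++ w :: b' = a' ++ (c :: w :: b') := by simp
                rw [e]; exact hmem)
              (List.isChain_cons_cons.mpr ⟨hforced, hch⟩)
              h7

lemma segment_zero : ∀ (N : ℕ) (m : List (Fin d)) (x : Vx d s) (i : Fin d),
    m.length ≤ N → m.Nodup → i ∉ m → ∀ h : ok x.1 (i :: m ++ [i]),
    P π x (i :: m ++ [i]) h = 0 := by
  intro N
  induction N with
  | zero =>
      intro m x i hlen _ _ h
      have : m = [] := List.length_eq_zero_iff.mp (by omega)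
      subst this
      exact P_ii hπ x i h
  | succ N ihN =>
      intro m x i hlen hnd hnm h
      by_cases hle : m.length ≤ N
      · exact ihN m x i hle hnd hnm h
      · have hlen' : (m ++ []).length = N + 1 := by simp; omega
        have := scan hπ N ihN m [] x i hlen' (by simpa using hnd)
          (by simpa using hnm) (List.isChain_singleton i) (by simpa using h)
        have e : i :: (m ++ []) ++ [i] = i :: m ++ [i] := by simp
        obtain ⟨h8, hP8⟩ := P_cast (π := π) e (by simpa using h)
        rw [← hP8] at *
        exact this

end Aux6
section Aux7
open Finsupp

variable {d s : ℕ} {F : Type} [Field F] {Λ : Type} [Ring Λ] [Algebra F Λ]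
variable {π : PathAlg F (Vx d s) → Λ} (hπ : IsPresentation π (RelDual F (d := d) (s := s)))

omit [Field F] [Ring Λ] [Algebra F Λ] hπ in
lemma split_first : ∀ (t : List (Fin d)) (c : Fin d), c ∈ t →
    ∃ m r, t = m ++ c :: r ∧ c ∉ m := by
  intro t
  induction t with
  | nil => simp
  | cons u t' ih =>
      intro c hc
      by_cases hcu : c = u
      · exact ⟨[], t', by simp [hcu], by simp⟩
      · obtain ⟨m, r, heq, hnm⟩ := ih c
          (by rcases List.mem_cons.mp hc with h | h; exact absurd h hcu; exact h)
        exact ⟨u :: m, r, by simp [heq], by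
          simp only [List.mem_cons, not_or]
          exact ⟨hcu, hnm⟩⟩

omit [Field F] [Ring Λ] [Algebra F Λ] hπ in
lemma dup_window : ∀ (n : ℕ) (l : List (Fin d)), l.length ≤ n → ¬ l.Nodup →
    ∃ (l1 : List (Fin d)) (a : Fin d) (m l2 : List (Fin d)),
      l = l1 ++ a :: (m ++ a :: l2) ∧ a ∉ m ∧ m.Nodup := by
  intro n
  induction n with
  | zero =>
      intro l hl hnd
      have : l = [] := List.length_eq_zero_iff.mp (by omega)
      subst this
      simp at hnd
  | succ n ihn =>
      intro l hl hnd
      cases l with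
      | nil => simp at hnd
      | cons c t =>
          by_cases hct : c ∈ t
          · obtain ⟨m, r, heq, hcm⟩ := split_first t c hct
            by_cases hm : m.Nodup
            · exact ⟨[], c, m, r, by simp [heq], hcm, hm⟩
            · obtain ⟨l1, a, mm, l2, hmeq, ham, hmm⟩ := ihn m
                (by subst heq; simp at hl ⊢; omega) hm
              refine ⟨c :: l1, a, mm, l2 ++ c :: r, ?_, ham, hmm⟩
              rw [heq, hmeq]
              simp
          · have hnt : ¬ t.Nodup := fun hh => hnd (List.nodup_cons.mpr ⟨hct, hh⟩)
            obtain ⟨l1, a, m, l2, heq, ham, hm⟩ := ihn t (by simp at hl; omega) hnt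
            exact ⟨c :: l1, a, m, l2, by simp [heq], ham, hm⟩

omit [Ring Λ] [Algebra F Λ] hπ in
lemma pathOne_eq {x x' y y' : Vx d s} (hx : x = x') (hy : y = y')
    (e : Ar d s x y) (e' : Ar d s x' y') (h : e.1 = e'.1) :
    (⟨x, y, Quiver.Path.nil.cons e⟩ : PathIdx (Vx d s))
      = ⟨x', y', Quiver.Path.nil.cons e'⟩ := by
  subst hx
  subst hy
  rw [show e = e' from Subtype.ext h]

include hπ

lemma path_P : ∀ {a b : Vx d s} (p : Quiver.Path a b),
    ∃ h : ok a.1 (dirList p),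
      endv a (dirList p) h = b ∧
      π (Finsupp.single (⟨a, b, p⟩ : PathIdx (Vx d s)) 1) = P π a (dirList p) h := by
  intro a b p
  induction p with
  | nil =>
      have base : ∃ h : ok a.1 ([] : List (Fin d)),
          endv a [] h = a ∧
          π (Finsupp.single (⟨a, a, Quiver.Path.nil⟩ : PathIdx (Vx d s)) 1)
            = P π a [] h := ⟨trivial, rfl, rfl⟩
      have e0 : ([] : List (Fin d)) = dirList (Quiver.Path.nil : Quiver.Path a a) := by
        simp [dirList]
      exact e0 ▸ base
  | @cons b c p e ih =>
      obtain ⟨h, hend, hPe⟩ := ih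
      have hrun : run a.1 (dirList p) = b.1 := congrArg Subtype.val hend
      have hok2 : ok (run a.1 (dirList p)) [e.1] :=
        ⟨by rw [hrun]; exact e.2.1, trivial⟩
      have hok : ok a.1 (dirList p ++ [e.1]) := ok_append.mpr ⟨h, hok2⟩
      have hc : c = endv (endv a (dirList p) h) [e.1] hok2 :=
        Subtype.ext (by show c.1 = run (run a.1 (dirList p)) [e.1]
                        rw [hrun]; exact e.2.2)
      have hone : π (Finsupp.single
            (⟨b, c, Quiver.Path.nil.cons e⟩ : PathIdx (Vx d s)) 1)
          = P π (endv a (dirList p) h) [e.1] hok2 :=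
        congrArg (fun t => π (Finsupp.single t 1))
          (pathOne_eq hend.symm hc e
            (⟨e.1, hok2.1, rfl⟩ :
              Ar d s (endv a (dirList p) h) (endv (endv a (dirList p) h) [e.1] hok2))
            rfl)
      have e1 : dirList p ++ [(e : Ar d s b c).1] = dirList (p.cons e) := by
        simp [dirList]
      refine e1 ▸ ⟨hok, ?_, ?_⟩
      · apply Subtype.ext
        show run a.1 (dirList p ++ [e.1]) = c.1
        rw [run_append, hrun]
        exact e.2.2.symm
      · calc π (Finsupp.single (⟨a, c, p.cons e⟩ : PathIdx (Vx d s)) 1)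
            = π (Finsupp.single (⟨a, b, p⟩ : PathIdx (Vx d s)) 1)
              * π (Finsupp.single
                  (⟨b, c, Quiver.Path.nil.cons e⟩ :
                    PathIdx (Vx d s)) 1) := pi_comp hπ p (Quiver.Path.nil.cons e)
          _ = P π a (dirList p) h * P π (endv a (dirList p) h) [e.1] hok2 :=
              congrArg₂ (· * ·) hPe hone
          _ = P π a (dirList p ++ [e.1]) hok :=
              (P_append hπ a (dirList p) [e.1] hok).symm

end Aux7
/-- In the quadratic dual `Λ^! = (Λ^d_s)^!` — presented by the simplex quiver with
relations `f_i f_i = 0` and `f_i f_j = f_j f_i` — any path containing some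
arrow-direction `f_i` more than once is zero. -/
theorem stmt_12 (F : Type) [Field F] (d s : ℕ)
    (Λ : Type) [Ring Λ] [Algebra F Λ]
    (π : PathAlg F (Vx d s) → Λ) (hπ : IsPresentation π (RelDual F d s)) :
    ∀ p : PathIdx (Vx d s), (∃ i : Fin d, 2 ≤ (dirList p.2.2).count i) →
      π (Finsupp.single p 1) = 0 := by
  intro p hp
  obtain ⟨a, b, q⟩ := p
  obtain ⟨i, hi⟩ := hp
  have hi' : 2 ≤ (dirList q).count i := hi
  have hnd : ¬ (dirList q).Nodup := by
    intro hh
    have := List.nodup_iff_count_le_one.mp hh i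
    omega
  obtain ⟨l1, j, m, l2, heq, hjm, hmnd⟩ :=
    dup_window (d := d) (dirList q).length (dirList q) le_rfl hnd
  obtain ⟨hok, hend, hPq⟩ := path_P hπ q
  have goal1 : π (Finsupp.single (⟨a, b, q⟩ : PathIdx (Vx d s)) 1)
      = P π a (dirList q) hok := hPq
  rw [goal1]
  have e : dirList q = l1 ++ ((j :: m ++ [j]) ++ l2) := by rw [heq]; simp
  obtain ⟨hok2, hP2⟩ := P_cast (π := π) e hok
  rw [hP2, P_append hπ a l1 ((j :: m ++ [j]) ++ l2) hok2,
      P_append hπ (endv a l1 (ok_append.mp hok2).1) (j :: m ++ [j]) l2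
        (ok_append.mp hok2).2,
      segment_zero hπ m.length m _ j le_rfl hmnd hjm]
  simp
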